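/- If ⟪−,−⟫ is a double Poisson bracket on A, then its associated trilinear maps satisfy the identity m(m(f,a,g), b, h) − m(f, n(a,g,b), h) − m(f, a, m(g,b,h)) = 0 in A*, for all a, b ∈ A and f, g, h ∈ A*. (This is the Stasheff identity SI(5) on the component A*[−1] ⊗ A ⊗ A*[−1] ⊗ A ⊗ A*[−1] of the pre-Calabi-Yau structure associated with the bracket, from the proof of Theorem 5.1.) -/
import Mathlib


open TensorProduct

noncomputable section

variable {k : Type*} [Field k] [CharZero k]
variable {A : Type*} [NonUnitalRing A] [Module k A] [SMulCommClass k A A] [IsScalarTower k A A]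

/-- Outer left action of `A` on `A ⊗ A`: `a · (u ⊗ v) = (a*u) ⊗ v`. -/
def lAct (a : A) : A ⊗[k] A →ₗ[k] A ⊗[k] A :=
  TensorProduct.map (LinearMap.mulLeft k a) LinearMap.id

/-- Outer right action of `A` on `A ⊗ A`: `(u ⊗ v) · b = u ⊗ (v*b)`. -/
def rAct (b : A) : A ⊗[k] A →ₗ[k] A ⊗[k] A :=
  TensorProduct.map LinearMap.id (LinearMap.mulRight k b)

/-- `⟪a, u ⊗ v⟫_L = ⟪a,u⟫ ⊗ v`, extended linearly. -/
def brL (br : A →ₗ[k] A →ₗ[k] A ⊗[k] A) (a : A) :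
    A ⊗[k] A →ₗ[k] (A ⊗[k] A) ⊗[k] A :=
  TensorProduct.map (br a) LinearMap.id

/-- The cyclic permutation `σ(u ⊗ v ⊗ w) = w ⊗ u ⊗ v` on `(A ⊗ A) ⊗ A`. -/
def cyc : (A ⊗[k] A) ⊗[k] A →ₗ[k] (A ⊗[k] A) ⊗[k] A :=
  (TensorProduct.assoc k A A A).symm.toLinearMap ∘ₗ
    (TensorProduct.comm k (A ⊗[k] A) A).toLinearMap

/-- A double Poisson bracket: antisymmetry, Leibniz, and double Jacobi. -/
def IsDoublePoisson (br : A →ₗ[k] A →ₗ[k] A ⊗[k] A) : Prop :=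
  (∀ a b : A, br b a = - (TensorProduct.comm k A A) (br a b)) ∧
  (∀ a b c : A, br a (b * c) = rAct c (br a b) + lAct b (br a c)) ∧
  (∀ a b c : A,
    brL br a (br b c) + cyc (brL br b (br c a)) + cyc (cyc (brL br c (br a b))) = 0)

/-- `(f ⊗ g) : A ⊗ A → k`. -/
def pair2 (f g : Module.Dual k A) : A ⊗[k] A →ₗ[k] k :=
  TensorProduct.lift ((LinearMap.mul k k).compl₁₂ f g)

/-- The associated trilinear map `n(a,f,b) = (id ⊗ f)(⟪b,a⟫)`. -/
def nMap (br : A →ₗ[k] A →ₗ[k] A ⊗[k] A) (a : A) (f : Module.Dual k A) (b : A) : A :=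
  TensorProduct.rid k A (TensorProduct.map LinearMap.id f (br b a))

/-- The associated trilinear map `m(f,a,g)(b) = (f ⊗ g)(⟪b,a⟫)`. -/
def mMap (br : A →ₗ[k] A →ₗ[k] A ⊗[k] A) (f : Module.Dual k A) (a : A)
    (g : Module.Dual k A) : Module.Dual k A :=
  pair2 f g ∘ₗ br.flip a

/-- The left action of `A` on `A* = Hom_k(A,k)`: `(a·f)(c) = f(c*a)`. -/
def dL (a : A) (f : Module.Dual k A) : Module.Dual k A :=
  f ∘ₗ LinearMap.mulRight k a

/-- The right action of `A` on `A* = Hom_k(A,k)`: `(f·b)(c) = f(b*c)`. -/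
def dR (f : Module.Dual k A) (b : A) : Module.Dual k A :=
  f ∘ₗ LinearMap.mulLeft k b


lemma pair2_tmul (f g : Module.Dual k A) (u v : A) :
    pair2 f g (u ⊗ₜ[k] v) = f u * g v := by
  simp [pair2]

lemma pair2_comm (f g : Module.Dual k A) (w : A ⊗[k] A) :
    pair2 f g ((TensorProduct.comm k A A) w) = pair2 g f w := by
  induction w using TensorProduct.induction_on with
  | zero => simp
  | tmul u v => simp [pair2_tmul, mul_comm]
  | add x y hx hy => simp [map_add, hx, hy]

lemma comm_comm' (w : A ⊗[k] A) :
    (TensorProduct.comm k A A) ((TensorProduct.comm k A A) w) = w := by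
  induction w using TensorProduct.induction_on with
  | zero => simp
  | tmul u v => simp
  | add x y hx hy => simp [map_add, hx, hy]

lemma cyc_tmul (s t v : A) :
    (cyc : (A ⊗[k] A) ⊗[k] A →ₗ[k] _) ((s ⊗ₜ[k] t) ⊗ₜ[k] v) = (v ⊗ₜ[k] s) ⊗ₜ[k] t := by
  simp [cyc]

lemma brL_tmul (br : A →ₗ[k] A →ₗ[k] A ⊗[k] A) (a u v : A) :
    brL br a (u ⊗ₜ[k] v) = (br a u) ⊗ₜ[k] v := by
  simp [brL]

/-- If `⟪-,-⟫` is a double Poisson bracket, then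
`m(m(f,a,g), b, h) − m(f, n(a,g,b), h) − m(f, a, m(g,b,h)) = 0` in `A*` (the Stasheff
identity SI(5) on the component `A*[-1] ⊗ A ⊗ A*[-1] ⊗ A ⊗ A*[-1]`). -/
theorem quinticStasheff_on_dual_component (br : A →ₗ[k] A →ₗ[k] A ⊗[k] A)
    (h : IsDoublePoisson br) :
    ∀ (a b : A) (f g h' : Module.Dual k A),
      mMap br (mMap br f a g) b h' - mMap br f (nMap br a g b) h'
        - mMap br f a (mMap br g b h') = 0 := by
  obtain ⟨hanti, -, hjac⟩ := h
  intro a b f g h'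
  apply LinearMap.ext
  intro c
  simp only [LinearMap.sub_apply, LinearMap.zero_apply]
  set Φ : (A ⊗[k] A) ⊗[k] A →ₗ[k] k :=
    TensorProduct.lift ((LinearMap.mul k k).compl₁₂ (pair2 f h') g) with hΦ
  have hΦt : ∀ (x : A ⊗[k] A) (v : A), Φ (x ⊗ₜ[k] v) = pair2 f h' x * g v := by
    intro x v; simp [hΦ]
  -- Φ ∘ σ² on pure tensors
  have H1 : ∀ (x : A ⊗[k] A) (v : A),
      Φ (cyc (cyc (x ⊗ₜ[k] v))) = pair2 g f x * h' v := by
    intro x v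
    induction x using TensorProduct.induction_on with
    | zero => simp
    | tmul s t =>
        rw [cyc_tmul, cyc_tmul, hΦt, pair2_tmul, pair2_tmul]; ring
    | add p q hp hq =>
        simp only [TensorProduct.add_tmul, map_add, hp, hq, add_mul]
  -- Φ ∘ σ on pure tensors
  have H3 : ∀ (z : A ⊗[k] A) (x : A),
      Φ (cyc (z ⊗ₜ[k] x)) = f x * pair2 h' g z := by
    intro z x
    induction z using TensorProduct.induction_on with
    | zero => simp
    | tmul s t =>
        rw [cyc_tmul, hΦt, pair2_tmul, pair2_tmul]; ring
    | add p q hp hq =>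
        simp only [TensorProduct.add_tmul, map_add, hp, hq, mul_add]
  -- term 1
  have e1 : ∀ w : A ⊗[k] A,
      pair2 (mMap br f a g) h' w = - Φ (cyc (cyc (brL br a w))) := by
    intro w
    induction w using TensorProduct.induction_on with
    | zero => simp
    | tmul u v =>
        rw [brL_tmul, H1, pair2_tmul]
        have : (mMap br f a g) u = pair2 f g (br u a) := by
          simp [mMap]
        rw [this, hanti a u, map_neg, pair2_comm]
        ring
    | add x y hx hy =>
        simp only [map_add, hx, hy]; ring
  -- term 2
  have e2 : ∀ w : A ⊗[k] A,
      pair2 f h' (br c ((TensorProduct.rid k A)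
        (TensorProduct.map LinearMap.id g w))) = Φ (brL br c w) := by
    intro w
    induction w using TensorProduct.induction_on with
    | zero => simp
    | tmul p q =>
        rw [brL_tmul, hΦt]
        simp only [TensorProduct.map_tmul, LinearMap.id_coe, id_eq,
          TensorProduct.rid_tmul, map_smul, smul_eq_mul]
        ring
    | add x y hx hy =>
        simp only [map_add, hx, hy]
  -- term 3
  have e3 : ∀ w : A ⊗[k] A,
      pair2 f (mMap br g b h') w
        = - Φ (cyc (brL br b ((TensorProduct.comm k A A) w))) := by
    intro w
    induction w using TensorProduct.induction_on with
    | zero => simp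
    | tmul x y =>
        rw [pair2_tmul, TensorProduct.comm_tmul, brL_tmul, H3]
        have : (mMap br g b h') y = pair2 g h' (br y b) := by
          simp [mMap]
        rw [this, hanti b y, map_neg, pair2_comm]
        ring
    | add x y hx hy =>
        simp only [map_add, hx, hy]; ring
  have hm1 : (mMap br (mMap br f a g) b h') c
      = pair2 (mMap br f a g) h' (br c b) := rfl
  have hm2 : (mMap br f (nMap br a g b) h') c
      = pair2 f h' (br c (nMap br a g b)) := by
    simp [mMap]
  have hm3 : (mMap br f a (mMap br g b h')) c
      = pair2 f (mMap br g b h') (br c a) := rfl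
  have hcomm : (TensorProduct.comm k A A) (br c a) = - br a c := by
    rw [hanti a c, map_neg, comm_comm']
  rw [hm1, hm2, hm3, e1, e3, hcomm]
  have e2' : pair2 f h' (br c (nMap br a g b)) = Φ (brL br c (br b a)) := by
    rw [← e2 (br b a)]; rfl
  rw [e2']
  have key := congrArg Φ (hjac c b a)
  simp only [map_add, map_zero, map_neg] at key ⊢
  linear_combination -key
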